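/- Let D = ℤ + Xℚ[X]. For nonzero polynomials a, b ∈ D, there exist irreducible elements π₁, …, πₙ and ξ₁, …, ξₘ of D (n, m ≥ 0) and a unit u of D such that a·ξ₁⋯ξₘ = u·b·π₁⋯πₙ if and only if ord(a) = ord(b). -/

import Mathlib

open Polynomial

noncomputable def ZplusXQX : Subring (Polynomial ℚ) where
  carrier := {f | ∃ n : ℤ, f.coeff 0 = (n : ℚ)}
  zero_mem' := ⟨0, by simp⟩
  one_mem' := ⟨1, by simp⟩
  add_mem' := by
    rintro f g ⟨m, hm⟩ ⟨n, hn⟩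
    exact ⟨m + n, by simp [hm, hn]⟩
  mul_mem' := by
    rintro f g ⟨m, hm⟩ ⟨n, hn⟩
    exact ⟨m * n, by simp [Polynomial.mul_coeff_zero, hm, hn]⟩
  neg_mem' := by
    rintro f ⟨m, hm⟩
    exact ⟨-m, by simp [hm]⟩

namespace ZXQX

lemma isUnit_iff (x : ZplusXQX) : IsUnit x ↔ (x : ℚ[X]) = 1 ∨ (x : ℚ[X]) = -1 := by
  constructor
  · intro hu
    have hu' : IsUnit (x : ℚ[X]) := hu.map ZplusXQX.subtype
    obtain ⟨r, hr, hrx⟩ := Polynomial.isUnit_iff.mp hu'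
    obtain ⟨y, hy⟩ := hu.exists_right_inv
    have hxy : (x : ℚ[X]) * (y : ℚ[X]) = 1 := by exact_mod_cast congrArg (Subtype.val) hy
    obtain ⟨n, hn⟩ := x.2
    obtain ⟨m, hm⟩ := y.2
    have hco : (x : ℚ[X]).coeff 0 * (y : ℚ[X]).coeff 0 = 1 := by
      rw [← Polynomial.mul_coeff_zero, hxy]; simp
    rw [hn, hm] at hco
    have hnm : n * m = 1 := by exact_mod_cast hco
    have hn1 : n = 1 ∨ n = -1 := Int.isUnit_iff.mp (IsUnit.of_mul_eq_one (a := n) m hnm)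
    have hr0 : r = (n : ℚ) := by
      have := congrArg (fun p => Polynomial.coeff p 0) hrx
      simpa [hn] using this
    rcases hn1 with h | h <;> [left; right] <;>
      simp [← hrx, hr0, h]
  · intro h
    rcases h with h | h
    · exact ⟨1, Subtype.ext (by simp [h])⟩
    · exact ⟨⟨⟨-1, ⟨-1, by simp⟩⟩, ⟨-1, ⟨-1, by simp⟩⟩, Subtype.ext (by simp), Subtype.ext (by simp)⟩,
        Subtype.ext (by simp [h])⟩


lemma coe_mul (x y : ZplusXQX) : ((x * y : ZplusXQX) : ℚ[X]) = (x : ℚ[X]) * (y : ℚ[X]) := rfl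

lemma irr_coeff0 {x : ZplusXQX} (hx : Irreducible x) : (x : ℚ[X]).coeff 0 ≠ 0 := by
  intro h0
  have hmem : (Polynomial.C (1/2 : ℚ) * (x : ℚ[X])) ∈ ZplusXQX := ⟨0, by simp [h0]⟩
  set y : ZplusXQX := ⟨Polynomial.C (1/2 : ℚ) * (x : ℚ[X]), hmem⟩ with hy
  have h2 : ((2 : ZplusXQX) : ℚ[X]) = 2 := by norm_cast
  have hfac : x = 2 * y := by
    apply Subtype.ext
    rw [coe_mul, h2, hy]
    rw [← mul_assoc]
    have h2C : (2 : ℚ[X]) = Polynomial.C (2:ℚ) := by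
      rw [show ((2:ℚ)) = ((2:ℕ):ℚ) by norm_num, Polynomial.C_eq_natCast]; norm_num
    have : (2 : ℚ[X]) * Polynomial.C (1/2 : ℚ) = 1 := by
      rw [h2C, ← Polynomial.C_mul]; norm_num
    rw [this, one_mul]
  rcases hx.isUnit_or_isUnit hfac with h | h
  · rcases (isUnit_iff _).mp h with h' | h' <;> rw [h2] at h'
    · exact absurd (congrArg (fun p => Polynomial.coeff p 0) h') (by norm_num)
    · exact absurd (congrArg (fun p => Polynomial.coeff p 0) h') (by norm_num)
  · rcases (isUnit_iff _).mp h with h' | h' <;>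
    · have := congrArg (fun p => Polynomial.coeff p 0) h'
      simp [hy] at this
      simp [h0] at this

/-- the measure used for induction -/
noncomputable def mu (x : ZplusXQX) : ℕ :=
  (x : ℚ[X]).natDegree + ((x : ℚ[X]).coeff 0).num.natAbs

lemma nonunit_bound {x : ZplusXQX} (hx : (x : ℚ[X]).coeff 0 ≠ 0) (hu : ¬ IsUnit x) :
    1 ≤ (x : ℚ[X]).natDegree ∨ 2 ≤ ((x : ℚ[X]).coeff 0).num.natAbs := by
  by_contra hcon
  push_neg at hcon
  obtain ⟨hd, hn⟩ := hcon
  have hd0 : (x : ℚ[X]).natDegree = 0 := by omega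
  obtain ⟨n, hn'⟩ := x.2
  have hn1 : n.natAbs = 1 := by
    have h1 : n ≠ 0 := by rintro rfl; rw [hn'] at hx; simp at hx
    have h2 : ((x : ℚ[X]).coeff 0).num.natAbs = n.natAbs := by rw [hn']; simp
    omega
  have hxC : (x : ℚ[X]) = Polynomial.C ((x : ℚ[X]).coeff 0) :=
    Polynomial.eq_C_of_natDegree_eq_zero hd0
  apply hu
  rw [isUnit_iff]
  rcases Int.natAbs_eq_iff.mp hn1 with h | h
  · left; rw [hxC, hn', h]; norm_num
  · right; rw [hxC, hn', h]; norm_num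

end ZXQX

namespace ZXQX2
open ZXQX

lemma coe_ne_zero {x : ZplusXQX} (hx : (x : ℚ[X]).coeff 0 ≠ 0) : (x : ℚ[X]) ≠ 0 :=
  fun h => hx (by simp [h])

lemma mu_lt_mul {x y : ZplusXQX} (hx : (x : ℚ[X]).coeff 0 ≠ 0)
    (hy : (y : ℚ[X]).coeff 0 ≠ 0) (hxu : ¬ IsUnit x) : mu y < mu (x * y) := by
  obtain ⟨n, hn⟩ := x.2
  obtain ⟨m, hm⟩ := y.2
  have hn0 : n ≠ 0 := by rintro rfl; rw [hn] at hx; simp at hx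
  have hm0 : m ≠ 0 := by rintro rfl; rw [hm] at hy; simp at hy
  have hdeg : ((x * y : ZplusXQX) : ℚ[X]).natDegree
      = (x : ℚ[X]).natDegree + (y : ℚ[X]).natDegree := by
    rw [coe_mul]; exact Polynomial.natDegree_mul (coe_ne_zero hx) (coe_ne_zero hy)
  have hc : ((x * y : ZplusXQX) : ℚ[X]).coeff 0 = ((n * m : ℤ) : ℚ) := by
    rw [coe_mul, Polynomial.mul_coeff_zero, hn, hm]; push_cast; ring
  have habs : (((x * y : ZplusXQX) : ℚ[X]).coeff 0).num.natAbs
      = n.natAbs * m.natAbs := by rw [hc, Rat.num_intCast, Int.natAbs_mul]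
  have hxb := nonunit_bound hx hxu
  rw [hn] at hxb; simp only [Rat.num_intCast] at hxb
  have hmy : ((y : ℚ[X]).coeff 0).num.natAbs = m.natAbs := by rw [hm]; simp
  have hm1 : 1 ≤ m.natAbs := Int.natAbs_pos.mpr hm0
  have hn1 : 1 ≤ n.natAbs := Int.natAbs_pos.mpr hn0
  unfold mu
  rw [hdeg, habs, hmy]
  rcases hxb with h | h
  · nlinarith
  · nlinarith

lemma factor_aux : ∀ N : ℕ, ∀ x : ZplusXQX, mu x ≤ N → (x : ℚ[X]).coeff 0 ≠ 0 →
    ∃ (u : ZplusXQXˣ) (l : List ZplusXQX), (∀ p ∈ l, Irreducible p) ∧ x = ↑u * l.prod := by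
  intro N
  induction N using Nat.strong_induction_on with
  | _ N ih =>
    intro x hmu hx
    by_cases hu : IsUnit x
    · exact ⟨hu.unit, [], by simp, by simp⟩
    by_cases hi : Irreducible x
    · exact ⟨1, [x], by simp [hi], by simp⟩
    rw [irreducible_iff] at hi
    push_neg at hi
    obtain ⟨y, z, hxyz, hyu, hzu⟩ := hi hu
    have hyc : (y : ℚ[X]).coeff 0 ≠ 0 := by
      intro h
      apply hx
      rw [hxyz, coe_mul, Polynomial.mul_coeff_zero, h, zero_mul]
    have hzc : (z : ℚ[X]).coeff 0 ≠ 0 := by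
      intro h
      apply hx
      rw [hxyz, coe_mul, Polynomial.mul_coeff_zero, h, mul_zero]
    have hylt : mu y < mu x := by
      rw [hxyz, mul_comm]; exact mu_lt_mul hzc hyc hzu
    have hzlt : mu z < mu x := by
      rw [hxyz]; exact mu_lt_mul hyc hzc hyu
    obtain ⟨u₁, l₁, hl₁, hy1⟩ := ih (mu y) (by omega) y le_rfl hyc
    obtain ⟨u₂, l₂, hl₂, hz1⟩ := ih (mu z) (by omega) z le_rfl hzc
    refine ⟨u₁ * u₂, l₁ ++ l₂, ?_, ?_⟩
    · intro p hp
      rcases List.mem_append.mp hp with h | h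
      exacts [hl₁ p h, hl₂ p h]
    · rw [hxyz, hy1, hz1, List.prod_append, Units.val_mul]; ring

lemma factor (x : ZplusXQX) (hx : (x : ℚ[X]).coeff 0 ≠ 0) :
    ∃ (u : ZplusXQXˣ) (l : List ZplusXQX), (∀ p ∈ l, Irreducible p) ∧ x = ↑u * l.prod :=
  factor_aux (mu x) x le_rfl hx

end ZXQX2

namespace ZXQX3
open ZXQX ZXQX2

lemma coe_prod (l : List ZplusXQX) :
    ((l.prod : ZplusXQX) : ℚ[X]) = (l.map (fun p => (p : ℚ[X]))).prod := by
  induction l with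
  | nil => simp
  | cons p l ih => simp [ZXQX.coe_mul, ih]

lemma prod_coeff0 {l : List ZplusXQX} (hl : ∀ p ∈ l, Irreducible p) :
    ((l.prod : ZplusXQX) : ℚ[X]).coeff 0 ≠ 0 := by
  induction l with
  | nil => simp
  | cons p l ih =>
    rw [List.prod_cons, ZXQX.coe_mul, Polynomial.mul_coeff_zero]
    exact mul_ne_zero (irr_coeff0 (hl p (by simp)))
      (ih (fun q hq => hl q (List.mem_cons_of_mem p hq)))

lemma ntd_zero {p : ℚ[X]} (hp : p.coeff 0 ≠ 0) : p.natTrailingDegree = 0 := by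
  simp [Polynomial.natTrailingDegree_eq_zero, hp]

lemma unit_coeff0 (u : ZplusXQXˣ) : ((u : ZplusXQX) : ℚ[X]).coeff 0 ≠ 0 := by
  rcases (isUnit_iff _).mp u.isUnit with h | h <;> rw [h] <;> norm_num

theorem main (a b : ZplusXQX) (ha : a ≠ 0) (hb : b ≠ 0) :
    (∃ (u : ZplusXQXˣ) (l₁ l₂ : List ZplusXQX),
        (∀ p ∈ l₁, Irreducible p) ∧ (∀ p ∈ l₂, Irreducible p) ∧
        a * l₂.prod = ↑u * b * l₁.prod) ↔
      (a : Polynomial ℚ).natTrailingDegree = (b : Polynomial ℚ).natTrailingDegree := by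
  have ha' : (a : ℚ[X]) ≠ 0 := fun h => ha (Subtype.ext (by simp [h]))
  have hb' : (b : ℚ[X]) ≠ 0 := fun h => hb (Subtype.ext (by simp [h]))
  constructor
  · rintro ⟨u, l₁, l₂, hl₁, hl₂, heq⟩
    have heq' : (a : ℚ[X]) * ((l₂.prod : ZplusXQX) : ℚ[X])
        = ((u : ZplusXQX) : ℚ[X]) * (b : ℚ[X]) * ((l₁.prod : ZplusXQX) : ℚ[X]) := by
      have := congrArg (fun x : ZplusXQX => (x : ℚ[X])) heq
      simpa [ZXQX.coe_mul] using this
    have h1 := prod_coeff0 hl₁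
    have h2 := prod_coeff0 hl₂
    have hu := unit_coeff0 u
    have := congrArg Polynomial.natTrailingDegree heq'
    rw [Polynomial.natTrailingDegree_mul ha' (coe_ne_zero h2),
      Polynomial.natTrailingDegree_mul (mul_ne_zero (coe_ne_zero hu) hb') (coe_ne_zero h1),
      Polynomial.natTrailingDegree_mul (coe_ne_zero hu) hb',
      ntd_zero h1, ntd_zero h2, ntd_zero hu] at this
    omega
  · intro hk
    set k := (b : ℚ[X]).natTrailingDegree with hkdef
    have hdA : (Polynomial.X : ℚ[X]) ^ k ∣ (a : ℚ[X]) := by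
      rw [Polynomial.X_pow_dvd_iff]
      intro d hd
      exact Polynomial.coeff_eq_zero_of_lt_natTrailingDegree (by omega)
    have hdB : (Polynomial.X : ℚ[X]) ^ k ∣ (b : ℚ[X]) := by
      rw [Polynomial.X_pow_dvd_iff]
      intro d hd
      exact Polynomial.coeff_eq_zero_of_lt_natTrailingDegree (by omega)
    obtain ⟨A, hA⟩ := hdA
    obtain ⟨B, hB⟩ := hdB
    have hA0 : A.coeff 0 = (a : ℚ[X]).coeff k := by
      rw [hA]; simpa using (Polynomial.coeff_X_pow_mul A k 0).symm
    have hB0 : B.coeff 0 = (b : ℚ[X]).coeff k := by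
      rw [hB]; simpa using (Polynomial.coeff_X_pow_mul B k 0).symm
    have hA0' : A.coeff 0 ≠ 0 := by
      rw [hA0, ← hk]
      exact Polynomial.coeff_natTrailingDegree_ne_zero.mpr ha'
    have hB0' : B.coeff 0 ≠ 0 := by
      rw [hB0, hkdef]
      exact Polynomial.coeff_natTrailingDegree_ne_zero.mpr hb'
    set q : ℕ := (A.coeff 0).den * (B.coeff 0).den with hq
    have hq0 : (q : ℚ) ≠ 0 := by
      simp [hq, Rat.den_ne_zero]
    have hAm : (Polynomial.C (q : ℚ) * A) ∈ ZplusXQX := by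
      refine ⟨(A.coeff 0).num * (B.coeff 0).den, ?_⟩
      rw [Polynomial.mul_coeff_zero, Polynomial.coeff_C_zero, hq]
      push_cast
      linear_combination ((B.coeff 0).den : ℚ) * Rat.mul_den_eq_num (A.coeff 0)
    have hBm : (Polynomial.C (q : ℚ) * B) ∈ ZplusXQX := by
      refine ⟨(B.coeff 0).num * (A.coeff 0).den, ?_⟩
      rw [Polynomial.mul_coeff_zero, Polynomial.coeff_C_zero, hq]
      push_cast
      linear_combination ((A.coeff 0).den : ℚ) * Rat.mul_den_eq_num (B.coeff 0)
    set fA : ZplusXQX := ⟨Polynomial.C (q : ℚ) * A, hAm⟩ with hfA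
    set fB : ZplusXQX := ⟨Polynomial.C (q : ℚ) * B, hBm⟩ with hfB
    have hfA0 : ((fA : ZplusXQX) : ℚ[X]).coeff 0 ≠ 0 := by
      rw [hfA]
      simp only [Polynomial.mul_coeff_zero, Polynomial.coeff_C_zero]
      exact mul_ne_zero hq0 hA0'
    have hfB0 : ((fB : ZplusXQX) : ℚ[X]).coeff 0 ≠ 0 := by
      rw [hfB]
      simp only [Polynomial.mul_coeff_zero, Polynomial.coeff_C_zero]
      exact mul_ne_zero hq0 hB0'
    have hkey : a * fB = b * fA := by
      apply Subtype.ext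
      rw [ZXQX.coe_mul, ZXQX.coe_mul, hfA, hfB]
      show (a : ℚ[X]) * (Polynomial.C (q:ℚ) * B) = (b : ℚ[X]) * (Polynomial.C (q:ℚ) * A)
      rw [hA, hB]; ring
    obtain ⟨u₁, l₁, hl₁, hfa⟩ := factor fA hfA0
    obtain ⟨u₂, l₂, hl₂, hfb⟩ := factor fB hfB0
    refine ⟨u₁ * u₂⁻¹, l₁, l₂, hl₁, hl₂, ?_⟩
    have hu2 : ((u₂ : ZplusXQX) : ZplusXQX) ≠ 0 := u₂.ne_zero
    apply mul_right_cancel₀ hu2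
    have e1 : a * l₂.prod * ↑u₂ = a * fB := by rw [hfb]; ring
    have e2 : ↑(u₁ * u₂⁻¹) * b * l₁.prod * ↑u₂ = b * (↑u₁ * l₁.prod) := by
      rw [Units.val_mul]
      have : (↑u₂⁻¹ * ↑u₂ : ZplusXQX) = 1 := by
        rw [← Units.val_mul, inv_mul_cancel]; rfl
      calc ↑u₁ * ↑u₂⁻¹ * b * l₁.prod * ↑u₂
          = (↑u₂⁻¹ * ↑u₂) * (↑u₁ * b * l₁.prod) := by ring
        _ = b * (↑u₁ * l₁.prod) := by rw [this]; ring
    rw [e1, e2, ← hfa, hkey]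

end ZXQX3

/-- In `D = ℤ + Xℚ[X]`, for nonzero `a b ∈ D` there are irreducibles `π₁,…,πₙ` and
`ξ₁,…,ξₘ` of `D` and a unit `u` of `D` with `a ξ₁⋯ξₘ = u b π₁⋯πₙ` iff
`ord a = ord b`. -/
theorem ZplusXQX_connected_iff_ord_eq (a b : ZplusXQX) (ha : a ≠ 0) (hb : b ≠ 0) :
    (∃ (u : ZplusXQXˣ) (l₁ l₂ : List ZplusXQX),
        (∀ p ∈ l₁, Irreducible p) ∧ (∀ p ∈ l₂, Irreducible p) ∧
        a * l₂.prod = ↑u * b * l₁.prod) ↔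
      (a : Polynomial ℚ).natTrailingDegree = (b : Polynomial ℚ).natTrailingDegree :=
  ZXQX3.main a b ha hb
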